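/- Let κ > 0 and ζ > 0, and define r₀ : ℝ → ℝ by r₀(x) = L( (κ/ζ²)·x·exp(−x²/(2ζ²)) ), corresponding to the bump initial twist profile w₀(x) = κ·exp(−x²/(2ζ²)). Then: r₀ is an odd function; lim_{x→+∞} r₀(x) = 0; and r₀'(α)·r₀(α) < 0 if and only if α ∈ (−ζ, 0) ∪ (ζ, +∞). Consequently, the breakdown condition r₀'(α)·( r₀(α) + lim_{x→+∞} r₀(x) ) < 0 holds exactly for α ∈ (−ζ, 0) ∪ (ζ, +∞). -/

import Mathlib

open Filter

/-- The primitive `L` of the wave velocity `Q(ξ) = √(1+ξ²)` with `L 0 = 0`. -/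
noncomputable def L (u : ℝ) : ℝ := (u * Real.sqrt (1 + u ^ 2) + Real.arsinh u) / 2

lemma L_zero : L 0 = 0 := by simp [L]

lemma L_odd (u : ℝ) : L (-u) = -L u := by
  simp [L, Real.arsinh_neg]; ring

lemma L_pos {u : ℝ} (h : 0 < u) : 0 < L u := by
  have h1 : 0 < u * Real.sqrt (1 + u ^ 2) := by positivity
  have h2 : 0 < Real.arsinh u := Real.arsinh_pos_iff.2 h
  have : 0 < u * Real.sqrt (1 + u ^ 2) + Real.arsinh u := by linarith
  exact div_pos this two_pos

lemma L_neg {u : ℝ} (h : u < 0) : L u < 0 := by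
  have := L_pos (neg_pos.2 h)
  rw [L_odd] at this; linarith

lemma L_hasDerivAt (u : ℝ) : HasDerivAt L (Real.sqrt (1 + u ^ 2)) u := by
  have hs : (0:ℝ) < 1 + u ^ 2 := by positivity
  have hS : 0 < Real.sqrt (1 + u ^ 2) := Real.sqrt_pos.2 hs
  have h1 : HasDerivAt (fun u : ℝ => 1 + u ^ 2) (2 * u) u := by
    simpa using (hasDerivAt_pow 2 u).const_add 1
  have h2 : HasDerivAt (fun u : ℝ => Real.sqrt (1 + u ^ 2))
      (1 / (2 * Real.sqrt (1 + u ^ 2)) * (2 * u)) u :=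
    (Real.hasDerivAt_sqrt hs.ne').comp u h1
  have h3 : HasDerivAt (fun u : ℝ => u * Real.sqrt (1 + u ^ 2))
      (1 * Real.sqrt (1 + u ^ 2) + u * (1 / (2 * Real.sqrt (1 + u ^ 2)) * (2 * u))) u :=
    (hasDerivAt_id u).mul h2
  have h4 := Real.hasDerivAt_arsinh u
  have h5 := (h3.add h4).div_const 2
  refine h5.congr_deriv ?_
  have hsq : Real.sqrt (1 + u ^ 2) ^ 2 = 1 + u ^ 2 := Real.sq_sqrt hs.le
  field_simp
  nlinarith [hsq, hS]

/-- for the bump initial profile `w₀(x) = κ·exp(−x²/(2ζ²))`, the initial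
Riemann invariant `r₀(x) = L((κ/ζ²)·x·exp(−x²/(2ζ²)))` is odd, tends to `0` at `+∞`,
satisfies `r₀'(α)·r₀(α) < 0` iff `α ∈ (−ζ,0) ∪ (ζ,∞)`, and hence the breakdown condition
`r₀'(α)(r₀(α) + r₀(+∞)) < 0` holds exactly for `α ∈ (−ζ,0) ∪ (ζ,∞)`. -/
theorem bump_breakdown_condition
    (κ ζ : ℝ) (hκ : 0 < κ) (hζ : 0 < ζ)
    (r₀ : ℝ → ℝ)
    (hr₀ : ∀ x : ℝ, r₀ x = L ((κ / ζ ^ 2) * x * Real.exp (-x ^ 2 / (2 * ζ ^ 2)))) :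
    (∀ x : ℝ, r₀ (-x) = -r₀ x) ∧
    Tendsto r₀ atTop (nhds 0) ∧
    (∀ α : ℝ, deriv r₀ α * r₀ α < 0 ↔ α ∈ Set.Ioo (-ζ) 0 ∪ Set.Ioi ζ) ∧
    (∀ α : ℝ, deriv r₀ α * (r₀ α + limUnder atTop r₀) < 0 ↔
      α ∈ Set.Ioo (-ζ) 0 ∪ Set.Ioi ζ) := by
  set c : ℝ := κ / ζ ^ 2 with hc
  have hcpos : 0 < c := by positivity
  set g : ℝ → ℝ := fun x => c * x * Real.exp (-x ^ 2 / (2 * ζ ^ 2)) with hgdef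
  -- derivative of g
  have hg : ∀ x : ℝ, HasDerivAt g
      (c * Real.exp (-x ^ 2 / (2 * ζ ^ 2)) * (1 - x ^ 2 / ζ ^ 2)) x := by
    intro x
    have he : HasDerivAt (fun x : ℝ => -x ^ 2 / (2 * ζ ^ 2))
        (-(2 * x) / (2 * ζ ^ 2)) x := by
      simpa using ((hasDerivAt_pow 2 x).neg).div_const (2 * ζ ^ 2)
    have hexp := he.exp
    have hlin : HasDerivAt (fun x : ℝ => c * x) c x := by
      simpa using (hasDerivAt_id x).const_mul c
    have := hlin.mul hexp
    refine this.congr_deriv ?_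
    have hz : (ζ:ℝ) ^ 2 ≠ 0 := by positivity
    field_simp
    ring
  -- derivative of r₀
  have hr' : ∀ α : ℝ, HasDerivAt r₀
      (Real.sqrt (1 + g α ^ 2) * (c * Real.exp (-α ^ 2 / (2 * ζ ^ 2)) * (1 - α ^ 2 / ζ ^ 2))) α := by
    intro α
    have := (L_hasDerivAt (g α)).comp α (hg α)
    have hre : r₀ = fun x => L (g x) := funext hr₀
    rw [hre]
    exact this
  -- sign of r₀
  have hr0pos : ∀ α : ℝ, 0 < α → 0 < r₀ α := by
    intro α hα
    rw [hr₀]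
    exact L_pos (by positivity)
  have hr0neg : ∀ α : ℝ, α < 0 → r₀ α < 0 := by
    intro α hα
    rw [hr₀]
    apply L_neg
    have : c * α < 0 := mul_neg_of_pos_of_neg hcpos hα
    exact mul_neg_of_neg_of_pos this (Real.exp_pos _)
  have hr0zero : r₀ 0 = 0 := by rw [hr₀]; simp [L_zero]
  -- limit
  have hgtop : Tendsto g atTop (nhds 0) := by
    have hbase : Tendsto (fun x : ℝ => c * (x ^ 1 * Real.exp (-x))) atTop (nhds (c * 0)) :=
      (Real.tendsto_pow_mul_exp_neg_atTop_nhds_zero 1).const_mul c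
    rw [mul_zero] at hbase
    apply squeeze_zero' (g := fun x : ℝ => c * (x ^ 1 * Real.exp (-x)))
    · filter_upwards [eventually_ge_atTop (0:ℝ)] with x hx
      positivity
    · filter_upwards [eventually_ge_atTop (max 1 (2 * ζ ^ 2))] with x hx
      have hx1 : (1:ℝ) ≤ x := le_trans (le_max_left _ _) hx
      have hx2 : 2 * ζ ^ 2 ≤ x := le_trans (le_max_right _ _) hx
      have hxpos : 0 < x := lt_of_lt_of_le one_pos hx1
      have harg : -x ^ 2 / (2 * ζ ^ 2) ≤ -x := by
        rw [div_le_iff₀ (by positivity)]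
        nlinarith
      have := Real.exp_le_exp.2 harg
      simp only [hgdef, pow_one]
      have hcx : 0 ≤ c * x := by positivity
      calc c * x * Real.exp (-x ^ 2 / (2 * ζ ^ 2)) ≤ c * x * Real.exp (-x) := by
            exact mul_le_mul_of_nonneg_left this hcx
        _ = c * (x * Real.exp (-x)) := by ring
    · exact hbase
  have hrtop : Tendsto r₀ atTop (nhds 0) := by
    have hre : r₀ = fun x => L (g x) := funext hr₀
    rw [hre]
    have hcont : ContinuousAt L 0 := (L_hasDerivAt 0).continuousAt
    have := hcont.tendsto.comp hgtop
    simpa [L_zero, Function.comp_def] using this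
  -- main sign iff
  have main : ∀ α : ℝ, deriv r₀ α * r₀ α < 0 ↔ α ∈ Set.Ioo (-ζ) 0 ∪ Set.Ioi ζ := by
    intro α
    have hderiv : deriv r₀ α
        = Real.sqrt (1 + g α ^ 2) * (c * Real.exp (-α ^ 2 / (2 * ζ ^ 2)) * (1 - α ^ 2 / ζ ^ 2)) :=
      (hr' α).deriv
    set S : ℝ := Real.sqrt (1 + g α ^ 2) with hSdef
    have hS : 0 < S := Real.sqrt_pos.2 (by positivity)
    set E : ℝ := Real.exp (-α ^ 2 / (2 * ζ ^ 2)) with hEdef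
    have hE : 0 < E := Real.exp_pos _
    set A : ℝ := 1 - α ^ 2 / ζ ^ 2 with hAdef
    rw [hderiv]
    simp only [Set.mem_union, Set.mem_Ioo, Set.mem_Ioi]
    have hz2 : (0:ℝ) < ζ ^ 2 := by positivity
    have hsig : ∀ a : ℝ, 0 ≤ a → S * (c * E * a) * r₀ α = (S * (c * E)) * (a * r₀ α) := by
      intro a _; ring
    constructor
    · intro h
      by_contra hcon
      push_neg at hcon
      obtain ⟨h1, h2⟩ := hcon
      rcases lt_trichotomy α 0 with hα | hα | hα
      · -- α < 0, so α ≤ -ζ, hence A ≤ 0 and r₀ α < 0, product ≥ 0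
        have hαle : α ≤ -ζ := by
          by_contra hh
          push_neg at hh
          exact absurd (h1 hh) (not_le.2 hα)
        have hA : A ≤ 0 := by
          rw [hAdef, sub_nonpos, le_div_iff₀ hz2, one_mul]
          nlinarith
        have hD : S * (c * E * A) ≤ 0 :=
          mul_nonpos_of_nonneg_of_nonpos hS.le
            (mul_nonpos_of_nonneg_of_nonpos (by positivity) hA)
        nlinarith [mul_nonneg (neg_nonneg.2 hD) (neg_nonneg.2 (hr0neg α hα).le)]
      · subst hα
        rw [hr0zero, mul_zero] at h
        exact lt_irrefl 0 h
      · -- 0 < α ≤ ζ, so A ≥ 0 and r₀ α > 0, product ≥ 0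
        have hαle : α ≤ ζ := h2
        have hA : 0 ≤ A := by
          rw [hAdef, sub_nonneg, div_le_one hz2]
          nlinarith
        have hD : 0 ≤ S * (c * E * A) := by positivity
        have := mul_nonneg hD (hr0pos α hα).le
        linarith
    · intro h
      rcases h with ⟨h1, h2⟩ | h1
      · -- -ζ < α < 0 : A > 0, r₀ α < 0
        have hA : 0 < A := by
          rw [hAdef, sub_pos, div_lt_one hz2]
          nlinarith
        have hD : 0 < S * (c * E * A) := by positivity
        exact mul_neg_of_pos_of_neg hD (hr0neg α h2)
      · -- ζ < α : A < 0, r₀ α > 0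
        have hα : 0 < α := lt_trans hζ h1
        have hA : A < 0 := by
          rw [hAdef, sub_neg, lt_div_iff₀ hz2, one_mul]
          nlinarith
        have hD : S * (c * E * A) < 0 :=
          mul_neg_of_pos_of_neg hS (mul_neg_of_pos_of_neg (by positivity) hA)
        exact mul_neg_of_neg_of_pos hD (hr0pos α hα)
  refine ⟨?_, hrtop, main, ?_⟩
  · intro x
    rw [hr₀, hr₀]
    have : c * (-x) * Real.exp (-(-x) ^ 2 / (2 * ζ ^ 2))
        = -(c * x * Real.exp (-x ^ 2 / (2 * ζ ^ 2))) := by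
      rw [neg_sq]; ring
    rw [this, L_odd]
  · intro α
    rw [hrtop.limUnder_eq, add_zero]
    exact main α
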